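/- Let F be the CDF of a χ²₁ random variable. For all t > 0, √(2/π)·exp(−t/2)/(1+√t) < 1 − F(t) < √(8/π)·exp(−t/2)/(1+√t). -/

import Mathlib

open ProbabilityTheory MeasureTheory Real Set Filter


lemma exp_sq_integrableOn (x : ℝ) :
    IntegrableOn (fun u : ℝ ↦ Real.exp (-u ^ 2 / 2)) (Set.Ioi x) := by
  have h : Integrable (fun u : ℝ ↦ Real.exp (-(1/2 : ℝ) * u ^ 2)) :=
    integrable_exp_neg_mul_sq (by norm_num)
  have h2 : (fun u : ℝ ↦ Real.exp (-u ^ 2 / 2)) = fun u : ℝ ↦ Real.exp (-(1/2 : ℝ) * u ^ 2) := by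
    ext u; congr 1; ring
  rw [h2]; exact h.integrableOn

lemma hasDerivAt_negG (c : ℝ) (u : ℝ) (hu : 0 < u) :
    HasDerivAt (fun u : ℝ ↦ -(c * Real.exp (-u ^ 2 / 2) / (1 + u)))
      (c * Real.exp (-u ^ 2 / 2) * (u ^ 2 + u + 1) / (1 + u) ^ 2) u := by
  have hne : (1 : ℝ) + u ≠ 0 := by positivity
  have d1 : HasDerivAt (fun u : ℝ ↦ -u ^ 2 / 2) (-u) u := by
    have := ((hasDerivAt_pow 2 u).neg.div_const 2)
    simpa using this.congr_deriv (by ring)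
  have d2 : HasDerivAt (fun u : ℝ ↦ c * Real.exp (-u ^ 2 / 2))
      (c * (Real.exp (-u ^ 2 / 2) * (-u))) u := (d1.exp).const_mul c
  have d3 : HasDerivAt (fun u : ℝ ↦ (1 : ℝ) + u) 1 u := by
    simpa using (hasDerivAt_id u).const_add 1
  have := (d2.div d3 hne).neg
  exact this.congr_deriv (by ring)

lemma tendsto_negG (c : ℝ) :
    Tendsto (fun u : ℝ ↦ -(c * Real.exp (-u ^ 2 / 2) / (1 + u))) atTop (nhds 0) := by
  have h1 : Tendsto (fun u : ℝ ↦ c * Real.exp (-u ^ 2 / 2)) atTop (nhds (c * 0)) := by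
    refine Tendsto.const_mul c ?_
    refine Real.tendsto_exp_atBot.comp ?_
    have : Tendsto (fun u : ℝ ↦ u ^ 2 / 2) atTop atTop :=
      (tendsto_pow_atTop (by norm_num)).atTop_div_const (by norm_num)
    have h3 := tendsto_neg_atTop_atBot.comp this
    refine h3.congr fun u ↦ ?_
    simp [Function.comp, neg_div]
  have h2 : Tendsto (fun u : ℝ ↦ (1 : ℝ) + u) atTop atTop :=
    tendsto_atTop_add_const_left _ _ tendsto_id
  have := (h1.div_atTop h2).neg
  simpa using this

lemma tail_integral (c x : ℝ) (hc : 0 < c) (hx : 0 < x) :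
    (∫ u in Set.Ioi x, c * Real.exp (-u ^ 2 / 2) * (u ^ 2 + u + 1) / (1 + u) ^ 2)
      = c * Real.exp (-x ^ 2 / 2) / (1 + x) ∧
    IntegrableOn (fun u : ℝ ↦ c * Real.exp (-u ^ 2 / 2) * (u ^ 2 + u + 1) / (1 + u) ^ 2)
      (Set.Ioi x) := by
  have hderiv : ∀ u ∈ Set.Ioi x, HasDerivAt (fun u : ℝ ↦ -(c * Real.exp (-u ^ 2 / 2) / (1 + u)))
      (c * Real.exp (-u ^ 2 / 2) * (u ^ 2 + u + 1) / (1 + u) ^ 2) u :=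
    fun u hu ↦ hasDerivAt_negG c u (hx.trans hu)
  have hpos : ∀ u ∈ Set.Ioi x, 0 ≤ c * Real.exp (-u ^ 2 / 2) * (u ^ 2 + u + 1) / (1 + u) ^ 2 := by
    intro u hu
    have h1 : 0 < u := hx.trans hu
    positivity
  have hcont : ContinuousWithinAt (fun u : ℝ ↦ -(c * Real.exp (-u ^ 2 / 2) / (1 + u)))
      (Set.Ici x) x := (hasDerivAt_negG c x hx).continuousAt.continuousWithinAt
  constructor
  · have := integral_Ioi_of_hasDerivAt_of_nonneg hcont hderiv hpos (tendsto_negG c)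
    rw [this]; ring
  · exact integrableOn_Ioi_deriv_of_nonneg hcont hderiv hpos (tendsto_negG c)

lemma tail_bounds (x : ℝ) (hx : 0 < x) :
    Real.exp (-x ^ 2 / 2) / (1 + x) < (∫ u in Set.Ioi x, Real.exp (-u ^ 2 / 2)) ∧
    (∫ u in Set.Ioi x, Real.exp (-u ^ 2 / 2)) < 2 * Real.exp (-x ^ 2 / 2) / (1 + x) := by
  have hf := exp_sq_integrableOn x
  obtain ⟨e1, i1⟩ := tail_integral 1 x one_pos hx
  obtain ⟨e2, i2⟩ := tail_integral 2 x two_pos hx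
  have hvol : (0 : ENNReal) < MeasureTheory.volume (Set.Ioi x) := by
    simp [Real.volume_Ioi]
  constructor
  · have hpos : 0 < ∫ u in Set.Ioi x,
        (Real.exp (-u ^ 2 / 2) - 1 * Real.exp (-u ^ 2 / 2) * (u ^ 2 + u + 1) / (1 + u) ^ 2) := by
      rw [MeasureTheory.setIntegral_pos_iff_support_of_nonneg_ae]
      · refine lt_of_lt_of_le hvol (measure_mono ?_)
        intro u hu
        have hu0 : 0 < u := hx.trans hu
        refine ⟨?_, hu⟩
        have : Real.exp (-u ^ 2 / 2) - 1 * Real.exp (-u ^ 2 / 2) * (u ^ 2 + u + 1) / (1 + u) ^ 2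
            = Real.exp (-u ^ 2 / 2) * u / (1 + u) ^ 2 := by
          field_simp; ring
        simp only [Function.mem_support, this]
        positivity
      · filter_upwards [MeasureTheory.ae_restrict_mem measurableSet_Ioi] with u hu
        have hu0 : 0 < u := hx.trans hu
        have : Real.exp (-u ^ 2 / 2) - 1 * Real.exp (-u ^ 2 / 2) * (u ^ 2 + u + 1) / (1 + u) ^ 2
            = Real.exp (-u ^ 2 / 2) * u / (1 + u) ^ 2 := by
          field_simp; ring
        rw [this]; positivity
      · exact hf.sub i1
    rw [MeasureTheory.integral_sub hf i1, e1, one_mul] at hpos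
    linarith
  · have hpos : 0 < ∫ u in Set.Ioi x,
        (2 * Real.exp (-u ^ 2 / 2) * (u ^ 2 + u + 1) / (1 + u) ^ 2 - Real.exp (-u ^ 2 / 2)) := by
      rw [MeasureTheory.setIntegral_pos_iff_support_of_nonneg_ae]
      · refine lt_of_lt_of_le hvol (measure_mono ?_)
        intro u hu
        have hu0 : 0 < u := hx.trans hu
        refine ⟨?_, hu⟩
        have : 2 * Real.exp (-u ^ 2 / 2) * (u ^ 2 + u + 1) / (1 + u) ^ 2 - Real.exp (-u ^ 2 / 2)
            = Real.exp (-u ^ 2 / 2) * (u ^ 2 + 1) / (1 + u) ^ 2 := by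
          field_simp; ring
        simp only [Function.mem_support, this]
        positivity
      · filter_upwards [MeasureTheory.ae_restrict_mem measurableSet_Ioi] with u hu
        have hu0 : 0 < u := hx.trans hu
        have : 2 * Real.exp (-u ^ 2 / 2) * (u ^ 2 + u + 1) / (1 + u) ^ 2 - Real.exp (-u ^ 2 / 2)
            = Real.exp (-u ^ 2 / 2) * (u ^ 2 + 1) / (1 + u) ^ 2 := by
          field_simp; ring
        rw [this]; positivity
      · exact i2.sub hf
    rw [MeasureTheory.integral_sub i2 hf, e2] at hpos
    linarith

/-- Let `F` be the CDF of a `χ²₁` random variable, i.e. `F t = P(ε² ≤ t)` for `ε ~ N(0,1)`.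
For all `t > 0`,
`√(2/π) exp(-t/2)/(1+√t) < 1 - F t < √(8/π) exp(-t/2)/(1+√t)`. -/
theorem chi_squared_one_tail_bounds (t : ℝ) (ht : 0 < t) :
    Real.sqrt (2 / Real.pi) * Real.exp (-t / 2) / (1 + Real.sqrt t) <
      1 - ((gaussianReal 0 1) {x : ℝ | x ^ 2 ≤ t}).toReal ∧
    1 - ((gaussianReal 0 1) {x : ℝ | x ^ 2 ≤ t}).toReal <
      Real.sqrt (8 / Real.pi) * Real.exp (-t / 2) / (1 + Real.sqrt t) := by
  set x := Real.sqrt t with hxdef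
  have hx : 0 < x := Real.sqrt_pos.mpr ht
  have hx2 : x ^ 2 = t := Real.sq_sqrt ht.le
  have hpi : 0 < Real.pi := Real.pi_pos
  have hmeas : MeasurableSet {u : ℝ | u ^ 2 ≤ t} :=
    measurableSet_le (measurable_id.pow_const 2) measurable_const
  have hcompl : {u : ℝ | u ^ 2 ≤ t}ᶜ = Set.Iio (-x) ∪ Set.Ioi x := by
    ext u
    simp only [Set.mem_compl_iff, Set.mem_setOf_eq, not_le, Set.mem_union, Set.mem_Iio,
      Set.mem_Ioi]
    constructor
    · intro h
      rcases le_or_gt u 0 with h0 | h0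
      · left; nlinarith [sq_nonneg (u + x)]
      · right; nlinarith [sq_nonneg (u - x)]
    · rintro (h | h) <;> nlinarith
  have hpdf : ∀ u : ℝ, gaussianPDFReal 0 1 u
      = (Real.sqrt (2 * Real.pi))⁻¹ * Real.exp (-u ^ 2 / 2) := by
    intro u
    simp [gaussianPDFReal]
  have hpdf_int : MeasureTheory.Integrable (gaussianPDFReal 0 1) :=
    integrable_gaussianPDFReal 0 1
  have hpdf_nonneg : ∀ u : ℝ, 0 ≤ gaussianPDFReal 0 1 u := gaussianPDFReal_nonneg 0 1
  -- measure of complement as integral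
  have h1 : (gaussianReal 0 1) {u : ℝ | u ^ 2 ≤ t}ᶜ
      = ENNReal.ofReal (∫ u in {u : ℝ | u ^ 2 ≤ t}ᶜ, gaussianPDFReal 0 1 u) :=
    gaussianReal_apply_eq_integral 0 one_ne_zero _
  have hsub : 1 - ((gaussianReal 0 1) {u : ℝ | u ^ 2 ≤ t}).toReal
      = ((gaussianReal 0 1) {u : ℝ | u ^ 2 ≤ t}ᶜ).toReal := by
    rw [MeasureTheory.prob_compl_eq_one_sub hmeas,
      ENNReal.toReal_sub_of_le MeasureTheory.prob_le_one ENNReal.one_ne_top, ENNReal.toReal_one]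
  -- split the integral
  have hint_split : (∫ u in {u : ℝ | u ^ 2 ≤ t}ᶜ, gaussianPDFReal 0 1 u)
      = (∫ u in Set.Iio (-x), gaussianPDFReal 0 1 u)
        + ∫ u in Set.Ioi x, gaussianPDFReal 0 1 u := by
    rw [hcompl]
    refine MeasureTheory.setIntegral_union ?_ measurableSet_Ioi hpdf_int.integrableOn
      hpdf_int.integrableOn
    rw [Set.disjoint_left]
    intro u hu hu'
    simp only [Set.mem_Iio, Set.mem_Ioi] at hu hu'
    linarith
  have hrefl : (∫ u in Set.Iio (-x), gaussianPDFReal 0 1 u)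
      = ∫ u in Set.Ioi x, gaussianPDFReal 0 1 u := by
    have h := integral_comp_neg_Ioi x (gaussianPDFReal 0 1)
    rw [← MeasureTheory.integral_Iic_eq_integral_Iio, ← h]
    exact (MeasureTheory.setIntegral_congr_fun measurableSet_Ioi fun u _ ↦ by
      simp [hpdf, neg_sq]).symm
  have hIoi : (∫ u in Set.Ioi x, gaussianPDFReal 0 1 u)
      = (Real.sqrt (2 * Real.pi))⁻¹ * ∫ u in Set.Ioi x, Real.exp (-u ^ 2 / 2) := by
    simp_rw [hpdf]
    rw [MeasureTheory.integral_const_mul]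
  have htail : 1 - ((gaussianReal 0 1) {u : ℝ | u ^ 2 ≤ t}).toReal
      = 2 * (Real.sqrt (2 * Real.pi))⁻¹ * ∫ u in Set.Ioi x, Real.exp (-u ^ 2 / 2) := by
    rw [hsub, h1, ENNReal.toReal_ofReal
      (MeasureTheory.setIntegral_nonneg (hmeas.compl) fun u _ ↦ hpdf_nonneg u),
      hint_split, hrefl, hIoi]
    ring
  obtain ⟨hlow, hup⟩ := tail_bounds x hx
  have hs2pi : 0 < Real.sqrt (2 * Real.pi) := Real.sqrt_pos.mpr (by positivity)
  have hc1' : Real.sqrt (2 / Real.pi) * Real.sqrt (2 * Real.pi) = 2 := by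
    rw [← Real.sqrt_mul (by positivity), show 2 / Real.pi * (2 * Real.pi) = 4 by
      field_simp; ring, show (4 : ℝ) = 2 ^ 2 by norm_num, Real.sqrt_sq (by norm_num)]
  have hc1 : Real.sqrt (2 / Real.pi) = 2 * (Real.sqrt (2 * Real.pi))⁻¹ := by
    rw [← div_eq_mul_inv, eq_div_iff hs2pi.ne']; exact hc1'
  have hc2' : Real.sqrt (8 / Real.pi) * Real.sqrt (2 * Real.pi) = 4 := by
    rw [← Real.sqrt_mul (by positivity), show 8 / Real.pi * (2 * Real.pi) = 16 by
      field_simp; ring, show (16 : ℝ) = 4 ^ 2 by norm_num, Real.sqrt_sq (by norm_num)]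
  have hc2 : Real.sqrt (8 / Real.pi) = 4 * (Real.sqrt (2 * Real.pi))⁻¹ := by
    rw [← div_eq_mul_inv, eq_div_iff hs2pi.ne']; exact hc2'
  have hexp : Real.exp (-t / 2) = Real.exp (-x ^ 2 / 2) := by rw [hx2]
  have h1x : 0 < 1 + x := by linarith
  rw [htail, hc1, hc2, hexp]
  constructor
  · rw [mul_div_assoc]
    exact mul_lt_mul_of_pos_left hlow (by positivity)
  · have h2 := mul_lt_mul_of_pos_left hup
      (show (0 : ℝ) < 2 * (Real.sqrt (2 * Real.pi))⁻¹ by positivity)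
    calc 2 * (Real.sqrt (2 * Real.pi))⁻¹ * ∫ u in Set.Ioi x, Real.exp (-u ^ 2 / 2)
        < 2 * (Real.sqrt (2 * Real.pi))⁻¹ * (2 * Real.exp (-x ^ 2 / 2) / (1 + x)) := h2
      _ = 4 * (Real.sqrt (2 * Real.pi))⁻¹ * Real.exp (-x ^ 2 / 2) / (1 + x) := by ring
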